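/- arXiv:2605.20109 — 7 statements merged into one kernel-verified Lean document; each statement's English description precedes it below -/
import Mathlib

section
/- Let K = F_{q^{2m}} with Hermitian involution σ(x) = x^{q^m}. Let B ∈ K^{k×k} be a Hermitian matrix (B† = B) whose kernel has K-dimension h ≥ 1. Let a ∈ K^{k×1} and λ ∈ F_q with λ ≠ 0. If there exists z ∈ ker(B) with z†a ≠ 0, then the kernel of B + λ a a† has K-dimension h − 1. -/
open Matrix

/-- adding a rank-one Hermitian perturbation `λ a a†` to a Hermitian matrix `B`
with `z†a ≠ 0` for some `z ∈ ker B` drops the kernel dimension by one. -/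
theorem stmt1 (q m k h : ℕ) (hq : ∃ p r : ℕ, p.Prime ∧ 0 < r ∧ q = p ^ r) (hm : 1 ≤ m)
    (K : Type*) [Field K] [Fintype K] (hK : Fintype.card K = q ^ (2 * m))
    (B : Matrix (Fin k) (Fin k) K) (hHerm : (B.map fun x => x ^ q ^ m)ᵀ = B)
    (hker : Module.finrank K (LinearMap.ker B.mulVecLin) = h) (hh : 1 ≤ h)
    (a : Fin k → K) (l : K) (hl0 : l ≠ 0) (hlFq : l ^ q = l)
    (hz : ∃ z : Fin k → K, B.mulVec z = 0 ∧ ∑ i, (z i ^ q ^ m) * a i ≠ 0) :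
    Module.finrank K
      (LinearMap.ker (B + l • Matrix.vecMulVec a (fun j => a j ^ q ^ m)).mulVecLin) = h - 1 := by
  obtain ⟨p, r, hp, hr, rfl⟩ := hq
  haveI : Fact p.Prime := ⟨hp⟩
  -- characteristic of K is p
  haveI hchar : CharP K p := by
    obtain ⟨p', hp'⟩ := CharP.exists K
    haveI := hp'
    have hp'prime : p'.Prime := CharP.char_is_prime K p'
    obtain ⟨n, -, hn⟩ := FiniteField.card K p'
    have hpp' : p = p' := by
      have hdvd : p ∣ p' ^ (n : ℕ) := by
        rw [← hn, hK]
        exact dvd_pow (dvd_pow_self p hr.ne') (by positivity)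
      exact (Nat.prime_dvd_prime_iff_eq hp hp'prime).mp (hp.dvd_of_dvd_pow hdvd)
    rwa [hpp']
  haveI : ExpChar K p := ExpChar.prime hp
  set σ : K →+* K := iterateFrobenius K p (r * m) with hσdef
  have hσ : ∀ x : K, σ x = x ^ (p ^ r) ^ m := by
    intro x; rw [hσdef, iterateFrobenius_def, ← pow_mul]
  have hσσ : ∀ x : K, σ (σ x) = x := by
    intro x
    have hexp : p ^ (r * m) * p ^ (r * m) = (p ^ r) ^ (2 * m) := by
      rw [← pow_add, ← pow_mul]
      ring_nf
    rw [hσdef, iterateFrobenius_def, iterateFrobenius_def, ← pow_mul, hexp, ← hK,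
      FiniteField.pow_card]
  obtain ⟨z, hzB, hza⟩ := hz
  -- Hermitian entrywise
  have hH : ∀ i j, σ (B j i) = B i j := by
    intro i j
    have := congrFun (congrFun hHerm i) j
    simpa [hσ] using this
  -- linear functional
  set φ : (Fin k → K) →ₗ[K] K :=
    { toFun := fun x => ∑ j, σ (a j) * x j
      map_add' := fun x y => by
        simp [mul_add, Finset.sum_add_distrib]
      map_smul' := fun c x => by
        simp [Finset.mul_sum, mul_left_comm] } with hφdef
  have hφ : ∀ x, φ x = ∑ j, σ (a j) * x j := fun _ => rfl
  -- mulVec formula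
  have hMeq : ∀ x : Fin k → K,
      (B + l • vecMulVec a fun j => a j ^ (p ^ r) ^ m).mulVec x
        = B.mulVec x + (l * φ x) • a := by
    intro x
    funext i
    simp only [mulVec, dotProduct, Matrix.add_apply, Matrix.smul_apply, vecMulVec_apply,
      Pi.add_apply, Pi.smul_apply, smul_eq_mul, add_mul, Finset.sum_add_distrib, hφ,
      Finset.mul_sum]
    congr 1
    rw [Finset.sum_mul]
    refine Finset.sum_congr rfl fun j _ => ?_
    rw [hσ]
    ring
  -- sum over kernel vector kills B
  have hwB : ∀ j, ∑ i, σ (z i) * B i j = 0 := by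
    intro j
    have h1 : ∑ i, σ (z i) * B i j = σ (∑ i, B j i * z i) := by
      rw [map_sum]
      refine Finset.sum_congr rfl fun i _ => ?_
      rw [_root_.map_mul, hH]
      ring
    have h2 : (∑ i, B j i * z i) = B.mulVec z j := rfl
    rw [h1, h2, hzB]
    simp
  -- kernel equality
  have hkey : LinearMap.ker (B + l • vecMulVec a fun j => a j ^ (p ^ r) ^ m).mulVecLin
      = LinearMap.ker B.mulVecLin ⊓ LinearMap.ker φ := by
    ext x
    simp only [LinearMap.mem_ker, Submodule.mem_inf, mulVecLin_apply]
    constructor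
    · intro hx
      rw [hMeq] at hx
      have hwBx : ∑ i, σ (z i) * B.mulVec x i = 0 := by
        simp only [mulVec, dotProduct, Finset.mul_sum]
        rw [Finset.sum_comm]
        refine Finset.sum_eq_zero fun j _ => ?_
        have : ∑ i, σ (z i) * (B i j * x j) = (∑ i, σ (z i) * B i j) * x j := by
          rw [Finset.sum_mul]
          exact Finset.sum_congr rfl fun i _ => by ring
        rw [this, hwB j, zero_mul]
      have h0 : ∑ i, σ (z i) * (B.mulVec x i + (l * φ x) * a i) = 0 := by
        refine Finset.sum_eq_zero fun i _ => ?_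
        have : B.mulVec x i + (l * φ x) * a i = 0 := by
          have := congrFun hx i
          simpa using this
        rw [this, mul_zero]
      have hsplit : ∑ i, σ (z i) * (B.mulVec x i + (l * φ x) * a i)
          = (∑ i, σ (z i) * B.mulVec x i) + (l * φ x) * ∑ i, σ (z i) * a i := by
        rw [Finset.mul_sum, ← Finset.sum_add_distrib]
        exact Finset.sum_congr rfl fun i _ => by ring
      rw [hsplit, hwBx, zero_add] at h0
      have hzaσ : (∑ i, σ (z i) * a i) ≠ 0 := by
        simpa [hσ] using hza
      have hφx : φ x = 0 := by
        rcases mul_eq_zero.mp h0 with h' | h'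
        · rcases mul_eq_zero.mp h' with h'' | h''
          · exact absurd h'' hl0
          · exact h''
        · exact absurd h' hzaσ
      constructor
      · have := hx
        rw [hφx, mul_zero, zero_smul, add_zero] at this
        exact this
      · exact hφx
    · rintro ⟨hx1, hx2⟩
      rw [hMeq, hx1, hx2, mul_zero, zero_smul, add_zero]
  rw [hkey]
  -- dimension count
  set S := LinearMap.ker B.mulVecLin with hS
  have hzS : z ∈ S := by
    simp only [hS, LinearMap.mem_ker, mulVecLin_apply, hzB]
  set ψ : S →ₗ[K] K := φ.domRestrict S with hψdef
  have hφz : φ z ≠ 0 := by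
    have hcalc : φ z = σ (∑ i, z i ^ (p ^ r) ^ m * a i) := by
      rw [hφ, map_sum]
      refine Finset.sum_congr rfl fun i _ => ?_
      rw [_root_.map_mul, ← hσ (z i), hσσ]
      ring
    rw [hcalc]
    intro hc
    exact hza (σ.injective (by rw [hc, map_zero]))
  have hψz : ψ ⟨z, hzS⟩ ≠ 0 := hφz
  have hrange : Module.finrank K (LinearMap.range ψ) = 1 := by
    have hle : Module.finrank K (LinearMap.range ψ) ≤ 1 := by
      simpa using (LinearMap.range ψ).finrank_le
    have hne : LinearMap.range ψ ≠ ⊥ := by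
      intro hbot
      exact hψz (by
        have : ψ ⟨z, hzS⟩ ∈ LinearMap.range ψ := LinearMap.mem_range_self _ _
        rw [hbot] at this
        simpa using this)
    have hpos : Module.finrank K (LinearMap.range ψ) ≠ 0 := by
      intro h0
      exact hne (Submodule.finrank_eq_zero.mp h0)
    omega
  have hrn := LinearMap.finrank_range_add_finrank_ker ψ
  rw [hrange, hker] at hrn
  have hfin : Module.finrank K ↥(S ⊓ LinearMap.ker φ)
      = Module.finrank K (LinearMap.ker ψ) := by
    rw [hψdef, LinearMap.ker_domRestrict, ← Submodule.map_comap_subtype,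
      Submodule.finrank_map_subtype_eq]
  rw [hfin]
  omega
end

section
/- Let q = 3 and n ≥ 3. Let K be any field extension of F_3 and w ∈ K^n nonzero. Then there exist u ∈ F_3^n and M ∈ GL_n(F_3) such that w u^⊤ ≠ 0 and M M^⊤ = I_n + u^⊤ u. -/
open Matrix

/-- for `q = 3` and `n ≥ 3`, any nonzero `w ∈ K^n` admits `u ∈ F_3^n` and
`M ∈ GL_n(F_3)` with `w u^⊤ ≠ 0` and `M M^⊤ = I + u^⊤ u`. -/
theorem stmt3 (n : ℕ) (hn : 3 ≤ n)
    (K : Type*) [Field K] [Algebra (ZMod 3) K]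
    (w : Fin n → K) (hw : w ≠ 0) :
    ∃ (u : Fin n → ZMod 3) (M : Matrix (Fin n) (Fin n) (ZMod 3)),
      IsUnit M ∧ (∑ i, w i * algebraMap (ZMod 3) K (u i)) ≠ 0 ∧
      M * Mᵀ = 1 + Matrix.vecMulVec u u := by
  obtain ⟨i, hwi⟩ := Function.ne_iff.mp hw
  simp only [Pi.zero_apply] at hwi
  -- pick two other distinct indices
  have hcard : 1 < (Finset.univ.erase i).card := by
    have := Finset.card_erase_of_mem (Finset.mem_univ i)
    simp only [Finset.card_univ, Fintype.card_fin] at this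
    omega
  obtain ⟨j, hj, l, hl, hjl⟩ := Finset.one_lt_card.mp hcard
  have hij : j ≠ i := Finset.ne_of_mem_erase hj
  have hil : l ≠ i := Finset.ne_of_mem_erase hl
  have hφ : Function.Injective (algebraMap (ZMod 3) K) := (algebraMap (ZMod 3) K).injective
  have h2K : (2 : K) ≠ 0 := by
    have : algebraMap (ZMod 3) K 2 ≠ 0 := by
      intro h; exact (by decide : (2 : ZMod 3) ≠ 0) (hφ (by simpa using h))
    simpa [map_ofNat] using this
  -- choose c = ±1 with w i * c + w j + w l ≠ 0
  obtain ⟨c, hc1, hc2⟩ :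
      ∃ c : ZMod 3, c * c = 1 ∧
        w i * algebraMap (ZMod 3) K c + w j + w l ≠ 0 := by
    by_cases h : w i + w j + w l = 0
    · refine ⟨-1, by decide, ?_⟩
      rw [map_neg, _root_.map_one]
      intro h2
      have : (2 : K) * w i = 0 := by linear_combination h - h2
      exact hwi ((mul_eq_zero.mp this).resolve_left h2K)
    · exact ⟨1, by decide, by simpa using h⟩
  -- define u
  set u : Fin n → ZMod 3 := fun k =>
    (if k = i then c else 0) + (if k = j then 1 else 0) + (if k = l then 1 else 0) with hu
  have hdot : ∑ k, u k * u k = 0 := by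
    have hptw : ∀ k, u k * u k =
        (if k = i then 1 else 0) + (if k = j then 1 else 0) + (if k = l then 1 else 0) := by
      intro k
      simp only [hu]
      split_ifs <;> simp_all
    rw [Finset.sum_congr rfl fun k _ => hptw k]
    simp only [Finset.sum_add_distrib, Finset.sum_ite_eq', Finset.mem_univ, if_true]
    decide
  set V := vecMulVec u u with hV
  have hVV : V * V = 0 := by
    ext a b
    simp only [hV, mul_apply, vecMulVec_apply, Matrix.zero_apply]
    calc ∑ k, u a * u k * (u k * u b)
        = u a * u b * ∑ k, u k * u k := by
          rw [Finset.mul_sum]; exact Finset.sum_congr rfl fun k _ => by ring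
      _ = 0 := by rw [hdot, mul_zero]
  have hVsymm : Vᵀ = V := by
    ext a b; simp [hV, vecMulVec_apply, mul_comm]
  have h3V : V + V + V = 0 := by
    ext a b
    simp only [Matrix.add_apply, Matrix.zero_apply]
    exact (by decide : ∀ x : ZMod 3, x + x + x = 0) _
  refine ⟨u, 1 + (V + V), ?_, ?_, ?_⟩
  · have hmul : (1 + (V + V)) * (1 + V) = 1 := by
      calc (1 + (V + V)) * (1 + V)
          = 1 + (V + V + V) + (V * V + V * V) := by noncomm_ring
        _ = 1 := by rw [h3V, hVV]; simp
    have hmul' : (1 + V) * (1 + (V + V)) = 1 := by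
      calc (1 + V) * (1 + (V + V))
          = 1 + (V + V + V) + (V * V + V * V) := by noncomm_ring
        _ = 1 := by rw [h3V, hVV]; simp
    exact ⟨⟨1 + (V + V), 1 + V, hmul, hmul'⟩, rfl⟩
  · intro h
    apply hc2
    rw [← h]
    have hptw : ∀ k, w k * algebraMap (ZMod 3) K (u k) =
        (if k = i then w k * algebraMap (ZMod 3) K c else 0) +
        (if k = j then w k else 0) + (if k = l then w k else 0) := by
      intro k
      simp only [hu, map_add, apply_ite (algebraMap (ZMod 3) K), map_zero, _root_.map_one]
      split_ifs <;> simp_all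
    rw [Finset.sum_congr rfl fun k _ => hptw k]
    simp [Finset.sum_add_distrib, Finset.sum_ite_eq']
  · have hMT : (1 + (V + V))ᵀ = 1 + (V + V) := by
      rw [transpose_add, transpose_add, transpose_one, hVsymm]
    rw [hMT, hV]
    calc (1 + (V + V)) * (1 + (V + V))
        = 1 + V + (V + V + V)
            + ((V * V + V * V) + (V * V + V * V)) := by noncomm_ring
      _ = 1 + V := by rw [h3V, hVV]; simp
end

section
/- Let q = 2 and n ≥ 3. Let K be a field extension of F_2 and let w ∈ K^n be a vector that is not a K-scalar multiple of the all-ones vector (1,…,1). Then there exist u ∈ F_2^n and M ∈ GL_n(F_2) such that w u^⊤ ≠ 0 and M M^⊤ = I_n + u^⊤ u. -/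
open Matrix

lemma transpose_E {n : ℕ} (i j : Fin n) (c : ZMod 2) :
    (Matrix.single i j c)ᵀ = Matrix.single j i c := by
  ext a b
  simp [Matrix.single, and_comm]

lemma add_self_mat {n : ℕ} (A : Matrix (Fin n) (Fin n) (ZMod 2)) : A + A = 0 := by
  ext a b
  exact CharTwo.add_self_eq_zero _

/-- for `q = 2` and `n ≥ 3`, any `w ∈ K^n` which is not a `K`-multiple of the
all-ones vector admits `u ∈ F_2^n` and `M ∈ GL_n(F_2)` with `w u^⊤ ≠ 0` and
`M M^⊤ = I + u^⊤ u`. -/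
theorem stmt4 (n : ℕ) (hn : 3 ≤ n)
    (K : Type*) [Field K] [Algebra (ZMod 2) K]
    (w : Fin n → K) (hw : ∀ c : K, w ≠ fun _ => c) :
    ∃ (u : Fin n → ZMod 2) (M : Matrix (Fin n) (Fin n) (ZMod 2)),
      IsUnit M ∧ (∑ i, w i * algebraMap (ZMod 2) K (u i)) ≠ 0 ∧
      M * Mᵀ = 1 + Matrix.vecMulVec u u := by
  haveI : CharP K 2 := charP_of_injective_algebraMap
    (algebraMap (ZMod 2) K).injective 2
  -- find i, j with w i ≠ w j
  obtain ⟨i, j, hwij⟩ : ∃ i j : Fin n, w i ≠ w j := by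
    by_contra hc
    push_neg at hc
    exact hw (w ⟨0, by omega⟩) (funext fun b => hc b ⟨0, by omega⟩)
  have hij : i ≠ j := fun h => hwij (by rw [h])
  -- find k distinct from i and j
  obtain ⟨k, hki, hkj⟩ : ∃ k : Fin n, k ≠ i ∧ k ≠ j := by
    by_contra hall
    push_neg at hall
    have hsub : (Finset.univ : Finset (Fin n)) ⊆ {i, j} := by
      intro x _
      rcases eq_or_ne x i with h | h
      · simp [h]
      · simp [hall x h]
    have h1 := Finset.card_le_card hsub
    have h2 : ({i, j} : Finset (Fin n)).card ≤ 2 :=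
      le_trans (Finset.card_insert_le _ _) (by simp)
    simp [Finset.card_univ] at h1
    omega
  set E : Fin n → Fin n → Matrix (Fin n) (Fin n) (ZMod 2) :=
    fun a b => Matrix.single a b 1 with hE
  refine ⟨fun b => if b = i ∨ b = j then 1 else 0,
    1 + (E k i + E k j + E i j + E j k), ?_, ?_, ?_⟩
  · -- invertibility
    have hmul : (1 + (E k i + E k j + E i j + E j k)) *
        (1 + (E k i + E i k + E i i + E i j + E j k + E j i)) = 1 := by
      simp only [hE, mul_add, add_mul, one_mul, mul_one,
        single_mul_single_same, single_mul_single_of_ne, hij, hij.symm, hki, hki.symm,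
        hkj, hkj.symm, Ne, not_false_iff]
      abel_nf
      simp only [show (4 : ℕ) = 2 + 2 from rfl, show (4 : ℤ) = 2 + 2 from rfl, add_nsmul,
        add_zsmul, two_smul, two_zsmul, add_self_mat, add_zero, zero_add]
    exact ⟨⟨_, _, hmul, mul_eq_one_comm.mp hmul⟩, rfl⟩
  · -- the sum is nonzero
    have hsum : (∑ b, w b * algebraMap (ZMod 2) K (if b = i ∨ b = j then 1 else 0))
        = w i + w j := by
      rw [← Finset.sum_subset (Finset.subset_univ ({i, j} : Finset (Fin n)))]
      · rw [Finset.sum_pair hij]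
        simp
      · intro b _ hb
        simp only [Finset.mem_insert, Finset.mem_singleton] at hb
        push_neg at hb
        simp [hb.1, hb.2]
    rw [hsum]
    intro h
    have h' := eq_neg_of_add_eq_zero_left h
    rw [CharTwo.neg_eq] at h'
    exact hwij h'
  · -- the main identity
    have hvmv : Matrix.vecMulVec (fun b => if b = i ∨ b = j then (1 : ZMod 2) else 0)
        (fun b => if b = i ∨ b = j then 1 else 0)
        = E i i + E i j + E j i + E j j := by
      ext a b
      simp only [vecMulVec_apply, hE, Matrix.add_apply, Matrix.single]
      by_cases hai : a = i <;> by_cases haj : a = j <;>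
        by_cases hbi : b = i <;> by_cases hbj : b = j <;>
        simp_all [eq_comm]
    rw [hvmv]
    simp only [hE, transpose_add, transpose_one, transpose_E]
    simp only [mul_add, add_mul, one_mul, mul_one,
      single_mul_single_same, single_mul_single_of_ne, hij, hij.symm, hki, hki.symm,
      hkj, hkj.symm, Ne, not_false_iff]
    abel_nf
    simp only [two_smul, add_self_mat, add_zero, zero_add]
end

section
/- Let K = F_{9^m} with Hermitian involution σ(x) = x^{3^m}, and let C ⊆ K² be a 1-dimensional K-linear subspace with dim_K (C ∩ C^{⊥_H}) = 1 (i.e. C is Hermitian self-orthogonal). Then there exists M ∈ GL_2(F_3) such that the code C·M = {cM : c ∈ C} satisfies C·M ∩ (C·M)^{⊥_H} = {0}. -/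
open Matrix

/-- Hermitian (σ-twisted) dual of a code `C ⊆ K^n`, where σ = (x ↦ x^e). -/
noncomputable def hermDual {K : Type*} [Field K] (n e : ℕ) (C : Submodule K (Fin n → K)) :
    Submodule K (Fin n → K) :=
  ⨅ c ∈ C, LinearMap.ker (∑ i : Fin n, (c i ^ e) • (LinearMap.proj i : (Fin n → K) →ₗ[K] K))

lemma mem_hermDual {K : Type*} [Field K] {n e : ℕ} {C : Submodule K (Fin n → K)} {x : Fin n → K} :
    x ∈ hermDual n e C ↔ ∀ c ∈ C, ∑ i, c i ^ e * x i = 0 := by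
  simp [hermDual, Submodule.mem_iInf, LinearMap.mem_ker, LinearMap.sum_apply,
    LinearMap.smul_apply, LinearMap.proj_apply, smul_eq_mul]

lemma lcd_singleton {K : Type*} [Field K] {n e : ℕ} {w : Fin n → K}
    (hS : ∑ i, w i ^ e * w i ≠ 0) :
    Submodule.span K {w} ⊓ hermDual n e (Submodule.span K {w}) = ⊥ := by
  rw [eq_bot_iff]
  rintro u ⟨hu1, hu2⟩
  obtain ⟨a, rfl⟩ := Submodule.mem_span_singleton.1 hu1
  have h := mem_hermDual.1 hu2 w (Submodule.mem_span_singleton_self w)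
  have h2 : ∑ i, w i ^ e * (a • w) i = a * ∑ i, w i ^ e * w i := by
    rw [Finset.mul_sum]
    exact Finset.sum_congr rfl fun i _ => by simp [smul_eq_mul]; ring
  rw [h2] at h
  rcases mul_eq_zero.1 h with h | h
  · simp [h]
  · exact absurd h hS

lemma zmod3_pow (a : ZMod 3) (m : ℕ) : a ^ 3 ^ m = a := by
  haveI : Fact (Nat.Prime 3) := ⟨by norm_num⟩
  induction m with
  | zero => simp
  | succ n ih => rw [pow_succ, pow_mul, ih, ZMod.pow_card]

lemma herm_expand {K : Type*} [Field K] (q : ℕ) (x y t' : K)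
    (ht : t' ^ q = t') (h0 : x ^ q * x + y ^ q * y = 0)
    (hadd : (x + t' * y) ^ q = x ^ q + (t' * y) ^ q) :
    (x + t' * y) ^ q * (x + t' * y) + y ^ q * y
      = t' * (x ^ q * y + x * y ^ q) + t' ^ 2 * (y ^ q * y) := by
  rw [hadd, mul_pow, ht]
  linear_combination h0

/-- over `K = F_{9^m}`, every 1-dimensional Hermitian self-orthogonal code
`C ⊆ K²` becomes Hermitian LCD after right multiplication by a suitable `M ∈ GL₂(F_3)`. -/
theorem stmt6 (m : ℕ) (hm : 1 ≤ m)
    (K : Type*) [Field K] [Fintype K] [Algebra (ZMod 3) K] (hK : Fintype.card K = 9 ^ m)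
    (C : Submodule K (Fin 2 → K)) (hC1 : Module.finrank K C = 1)
    (hhull : Module.finrank K ↥(C ⊓ hermDual 2 (3 ^ m) C) = 1) :
    ∃ M : Matrix (Fin 2) (Fin 2) (ZMod 3), IsUnit M ∧
      (C.map (M.map (algebraMap (ZMod 3) K)).vecMulLinear) ⊓
        hermDual 2 (3 ^ m) (C.map (M.map (algebraMap (ZMod 3) K)).vecMulLinear) = ⊥ := by
  haveI : Fact (Nat.Prime 3) := ⟨by norm_num⟩
  have hinj : Function.Injective (algebraMap (ZMod 3) K) := (algebraMap (ZMod 3) K).injective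
  haveI : CharP K 3 := charP_of_injective_algebraMap hinj 3
  set q := 3 ^ m with hqdef
  have hq0 : q ≠ 0 := by positivity
  -- get a generator v of C
  have hC0 : C ≠ ⊥ := by
    intro h; rw [h, finrank_bot] at hC1; simp at hC1
  obtain ⟨v, hvC, hv0⟩ := Submodule.exists_mem_ne_zero_of_ne_bot hC0
  have hCv : Submodule.span K {v} = C := by
    apply Submodule.eq_of_le_of_finrank_le
      ((Submodule.span_le).2 (Set.singleton_subset_iff.2 hvC))
    rw [hC1, finrank_span_singleton hv0]
  have hself : C ≤ hermDual 2 q C := by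
    apply inf_eq_left.mp
    apply Submodule.eq_of_le_of_finrank_le inf_le_left
    rw [hhull, hC1]
  have h0 : ∑ i, v i ^ q * v i = 0 := mem_hermDual.1 (hself hvC) v hvC
  rw [Fin.sum_univ_two] at h0
  set x := v 0 with hx
  set y := v 1 with hy'
  have hy : y ≠ 0 := by
    intro h
    rw [h] at h0
    simp at h0
    have hx0 : x = 0 := by
      rcases h0 with h' | h'
      · exact h'.1
      · exact h'
    apply hv0
    funext i
    fin_cases i
    · exact hx0
    · exact h
  have hB : y ^ q * y ≠ 0 := mul_ne_zero (pow_ne_zero q hy) hy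
  have key : ∀ t : ZMod 3,
      algebraMap (ZMod 3) K t * (x ^ q * y + x * y ^ q)
        + (algebraMap (ZMod 3) K t) ^ 2 * (y ^ q * y) ≠ 0 →
      ∃ M : Matrix (Fin 2) (Fin 2) (ZMod 3), IsUnit M ∧
        (C.map (M.map (algebraMap (ZMod 3) K)).vecMulLinear) ⊓
          hermDual 2 q (C.map (M.map (algebraMap (ZMod 3) K)).vecMulLinear) = ⊥ := by
    intro t ht
    refine ⟨!![1, 0; t, 1], ?_, ?_⟩
    · rw [Matrix.isUnit_iff_isUnit_det, Matrix.det_fin_two_of]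
      simp
    · set t' := algebraMap (ZMod 3) K t with ht'
      have hw : (Matrix.map !![1, 0; t, 1] (algebraMap (ZMod 3) K)).vecMulLinear v
          = ![x + t' * y, y] := by
        funext j
        fin_cases j <;>
          simp [Matrix.vecMulLinear_apply, Matrix.vecMul, dotProduct,
            Fin.sum_univ_two, Matrix.map_apply] <;> ring
      rw [← hCv, Submodule.map_span, Set.image_singleton, hw]
      apply lcd_singleton
      rw [Fin.sum_univ_two]
      simp only [Matrix.cons_val_zero, Matrix.cons_val_one, Matrix.head_cons]
      have htq : t' ^ q = t' := by rw [ht', ← map_pow, hqdef, zmod3_pow]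
      have hadd : (x + t' * y) ^ q = x ^ q + (t' * y) ^ q := by
        rw [hqdef]
        exact add_pow_char_pow x (t' * y) 3 m
      rw [herm_expand q x y t' htq h0 hadd]
      exact ht
  by_cases hAB : (x ^ q * y + x * y ^ q) + y ^ q * y = 0
  · refine key 2 ?_
    have hA : x ^ q * y + x * y ^ q = -(y ^ q * y) := eq_neg_of_add_eq_zero_left hAB
    have hc2 : algebraMap (ZMod 3) K 2 = 2 := map_ofNat _ 2
    rw [hA, hc2]
    have h2ne : (2 : K) ≠ 0 := by
      have h : ((2 : ℕ) : K) ≠ 0 := fun hc => absurd ((CharP.cast_eq_zero_iff K 3 2).mp hc) (by norm_num)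
      simpa using h
    have heq : (2 : K) * -(y ^ q * y) + (2 : K) ^ 2 * (y ^ q * y) = 2 * (y ^ q * y) := by ring
    rw [heq]
    exact mul_ne_zero h2ne hB
  · refine key 1 ?_
    simpa using hAB
end

section
/- Let K = F_{2^{2m}} and let C ⊆ K^n be a k-dimensional K-linear code with n ≥ 3 whose Hermitian hull equals K·(1,…,1), the line spanned by the all-ones vector. Then there exists M ∈ GL_n(F_2) such that C·M has trivial Hermitian hull, i.e. C·M ∩ (C·M)^{⊥_H} = {0}. -/
open Matrix

/-- over `K = F_{2^{2m}}`, if the Hermitian hull of `C ⊆ K^n` (`n ≥ 3`) is the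
line spanned by the all-ones vector, then some `M ∈ GL_n(F_2)` makes `C·M` Hermitian LCD. -/
theorem stmt8 (m n : ℕ) (hm : 1 ≤ m) (hn : 3 ≤ n)
    (K : Type*) [Field K] [Fintype K] [Algebra (ZMod 2) K]
    (hK : Fintype.card K = 2 ^ (2 * m))
    (C : Submodule K (Fin n → K))
    (hhull : C ⊓ hermDual n (2 ^ m) C = Submodule.span K {(fun _ => 1 : Fin n → K)}) :
    ∃ M : Matrix (Fin n) (Fin n) (ZMod 2), IsUnit M ∧
      (C.map (M.map (algebraMap (ZMod 2) K)).vecMulLinear) ⊓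
        hermDual n (2 ^ m) (C.map (M.map (algebraMap (ZMod 2) K)).vecMulLinear) = ⊥ := by
  haveI : NeZero n := ⟨by omega⟩
  haveI : CharP K 2 := charP_of_injective_ringHom (algebraMap (ZMod 2) K).injective 2
  set q : ℕ := 2 ^ m with hq
  set o : Fin n → K := (fun _ => 1) with ho
  -- membership in hermDual
  have hmem : ∀ (D : Submodule K (Fin n → K)) (z : Fin n → K),
      z ∈ hermDual n q D ↔ ∀ c ∈ D, ∑ i, (c i) ^ q * z i = 0 := by
    intro D z
    simp [hermDual, Submodule.mem_iInf, LinearMap.mem_ker, LinearMap.sum_apply,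
      LinearMap.proj_apply, smul_eq_mul]
  -- 1 ∈ hull
  have h1hull : o ∈ C ⊓ hermDual n q C := by
    rw [hhull]; exact Submodule.mem_span_singleton_self _
  have h1C : o ∈ C := h1hull.1
  -- every codeword sums to zero
  have hsum0 : ∀ c ∈ C, ∑ i, c i = 0 := by
    intro c hc
    have h := (hmem C o).1 h1hull.2 c hc
    simp only [ho, mul_one] at h
    rw [← sum_pow_char_pow] at h
    exact pow_eq_zero_iff (by positivity) |>.1 h
  have hnK : (n : K) = 0 := by
    have := hsum0 o h1C
    simpa [ho, Finset.sum_const, nsmul_eq_mul] using this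
  -- the matrix
  set M : Matrix (Fin n) (Fin n) (ZMod 2) :=
    Matrix.of (fun i j => if i = 0 ∨ i = j then 1 else 0) with hM
  have hMsq : M * M = 1 := by
    ext i j
    rw [Matrix.mul_apply]
    by_cases hi : i = 0
    · subst hi
      have h0 : ∀ k, M 0 k = 1 := fun k => by simp [hM]
      simp only [h0, one_mul]
      by_cases hj : j = 0
      · subst hj
        have : ∀ k : Fin n, M k 0 = if k = 0 then 1 else 0 := by
          intro k; by_cases hk : k = 0 <;> simp [hM, hk]
        simp [this]
      · have : ∀ k : Fin n, M k j =
            (if k = 0 then 1 else 0) + (if k = j then 1 else 0) := by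
          intro k
          by_cases hk : k = 0
          · subst hk; simp [hM, Ne.symm hj]
          · by_cases hkj : k = j <;> simp [hM, hk, hkj, hj]
        rw [Finset.sum_congr rfl (fun k _ => this k), Finset.sum_add_distrib]
        simp only [Finset.sum_ite_eq', Finset.mem_univ, if_true]
        rw [CharTwo.add_self_eq_zero, Matrix.one_apply]
        rw [if_neg (fun h => hj h.symm)]
    · have : ∀ k : Fin n, M i k * M k j = if i = k then M k j else 0 := by
        intro k
        by_cases hk : i = k
        · subst hk; simp [hM, hi]
        · simp [hM, hi, hk]
      rw [Finset.sum_congr rfl (fun k _ => this k)]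
      rw [Finset.sum_ite_eq]
      simp only [Finset.mem_univ, if_true]
      by_cases hij : i = j <;> simp [hM, hi, hij, Matrix.one_apply]
  have hMunit : IsUnit M := ⟨⟨M, M, hMsq, hMsq⟩, rfl⟩
  refine ⟨M, hMunit, ?_⟩
  set ψ := (M.map (algebraMap (ZMod 2) K)).vecMulLinear with hψdef
  -- formula for ψ
  have hψ : ∀ (x : Fin n → K) (j : Fin n),
      ψ x j = x 0 + if j = 0 then 0 else x j := by
    intro x j
    have : ψ x j = ∑ i, x i * (if i = 0 ∨ i = j then (1 : K) else 0) := by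
      simp only [hψdef, Matrix.vecMulLinear_apply, Matrix.vecMul, dotProduct,
        Matrix.map_apply, hM, Matrix.of_apply]
      refine Finset.sum_congr rfl fun i _ => ?_
      by_cases h : i = 0 ∨ i = j <;> simp [h]
    rw [this]
    have split : ∀ i : Fin n, x i * (if i = 0 ∨ i = j then (1 : K) else 0) =
        (if i = 0 then x i else 0) + (if i = j ∧ i ≠ 0 then x i else 0) := by
      intro i
      by_cases h0 : i = 0
      · subst h0; simp
      · by_cases hji : i = j
        · subst hji; simp [h0]
        · simp [h0, hji]
    rw [Finset.sum_congr rfl (fun i _ => split i), Finset.sum_add_distrib]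
    congr 1
    · rw [Finset.sum_ite_eq']; simp
    · by_cases hj : j = 0
      · subst hj
        rw [Finset.sum_eq_zero]
        · simp
        · intro i _
          by_cases h : i = 0 <;> simp [h]
      · have : ∀ i : Fin n, (if i = j ∧ i ≠ 0 then x i else 0) =
            (if i = j then x i else 0) := by
          intro i
          by_cases hij : i = j
          · subst hij; simp [hj]
          · simp [hij]
        rw [Finset.sum_congr rfl (fun i _ => this i), Finset.sum_ite_eq']
        simp [hj]
  -- key computation
  have hkey : ∀ u v : Fin n → K, (∑ i, u i = 0) → (∑ i, v i = 0) →
      ∑ j, (ψ u j) ^ q * (ψ v j) = (∑ j, (u j) ^ q * v j) + (u 0) ^ q * v 0 := by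
    intro u v hu hv
    haveI := Fact.mk Nat.prime_two
    have hfrob : ∀ a b : K, (a + b) ^ q = a ^ q + b ^ q := fun a b =>
      add_pow_char_pow ..
    have expand : ∀ j : Fin n, (ψ u j) ^ q * (ψ v j) =
        (u 0) ^ q * v 0 + (u 0) ^ q * (if j = 0 then 0 else v j)
        + (if j = 0 then 0 else (u j) ^ q) * v 0
        + (if j = 0 then 0 else (u j) ^ q * v j) := by
      intro j
      rw [hψ u j, hψ v j, hfrob]
      have : (if j = 0 then (0:K) else u j) ^ q = (if j = 0 then 0 else (u j) ^ q) := by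
        by_cases h : j = 0 <;> simp [h, zero_pow, pow_eq_zero_iff, (by positivity : q ≠ 0)]
      rw [this]
      by_cases h : j = 0 <;> simp [h] <;> ring
    rw [Finset.sum_congr rfl (fun j _ => expand j)]
    rw [Finset.sum_add_distrib, Finset.sum_add_distrib, Finset.sum_add_distrib]
    have e1 : ∑ _j : Fin n, (u 0) ^ q * v 0 = 0 := by
      rw [Finset.sum_const, Finset.card_univ, Fintype.card_fin, nsmul_eq_mul, hnK, zero_mul]
    have hvsum : ∑ j, (if j = 0 then (0:K) else v j) = v 0 := by
      have : ∀ j : Fin n, (if j = 0 then (0:K) else v j) =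
          v j - (if j = 0 then v j else 0) := by
        intro j; by_cases h : j = 0 <;> simp [h]
      rw [Finset.sum_congr rfl (fun j _ => this j), Finset.sum_sub_distrib, hv,
        Finset.sum_ite_eq']
      simp [CharTwo.neg_eq]
    have husum : ∑ j, (if j = 0 then (0:K) else (u j) ^ q) = (u 0) ^ q := by
      have : ∀ j : Fin n, (if j = 0 then (0:K) else (u j) ^ q) =
          (u j) ^ q - (if j = 0 then (u j) ^ q else 0) := by
        intro j; by_cases h : j = 0 <;> simp [h]
      rw [Finset.sum_congr rfl (fun j _ => this j), Finset.sum_sub_distrib,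
        ← sum_pow_char_pow, hu, Finset.sum_ite_eq']
      simp [CharTwo.neg_eq, zero_pow, (by positivity : q ≠ 0)]
    have huvsum : ∑ j, (if j = 0 then (0:K) else (u j) ^ q * v j) =
        (∑ j, (u j) ^ q * v j) + (u 0) ^ q * v 0 := by
      have : ∀ j : Fin n, (if j = 0 then (0:K) else (u j) ^ q * v j) =
          (u j) ^ q * v j - (if j = 0 then (u j) ^ q * v j else 0) := by
        intro j; by_cases h : j = 0 <;> simp [h]
      rw [Finset.sum_congr rfl (fun j _ => this j), Finset.sum_sub_distrib,
        Finset.sum_ite_eq']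
      simp [CharTwo.neg_eq, sub_eq_add_neg]
    rw [e1, ← Finset.mul_sum, hvsum, ← Finset.sum_mul, husum, huvsum]
    have hAA : u 0 ^ q * v 0 + u 0 ^ q * v 0 = 0 := CharTwo.add_self_eq_zero _
    linear_combination hAA
  -- assemble
  rw [eq_bot_iff]
  rintro z hz
  rw [Submodule.mem_inf] at hz
  obtain ⟨hz1, hz2⟩ := hz
  obtain ⟨y, hyC, rfl⟩ := Submodule.mem_map.1 hz1
  have hz2' : ∀ x ∈ C, (∑ j, (x j) ^ q * y j) + (x 0) ^ q * y 0 = 0 := by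
    intro x hx
    have h := (hmem _ _).1 hz2 (ψ x) (Submodule.mem_map.2 ⟨x, hx, rfl⟩)
    rwa [hkey x y (hsum0 x hx) (hsum0 y hyC)] at h
  have hy0 : y 0 = 0 := by
    have h := hz2' o h1C
    have hB : ∑ j, (o j) ^ q * y j = 0 := by
      simpa [ho, one_pow] using hsum0 y hyC
    rw [hB, zero_add, ho] at h
    simpa using h
  have hyD : y ∈ hermDual n q C := by
    refine (hmem C y).2 fun x hx => ?_
    have h := hz2' x hx
    rwa [hy0, mul_zero, add_zero] at h
  have hyspan : y ∈ Submodule.span K {o} := by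
    rw [← hhull]; exact Submodule.mem_inf.2 ⟨hyC, hyD⟩
  obtain ⟨a, ha⟩ := Submodule.mem_span_singleton.1 hyspan
  have ha0 : a = 0 := by
    have := congrArg (fun f => f 0) ha
    simpa [ho, hy0] using this
  have : y = 0 := by rw [← ha, ha0, zero_smul]
  subst this
  simp [Submodule.mem_bot]
end

section
/- Let K = F_4 = F_2(ω) with ω² + ω + 1 = 0, and let C = K·(1, ω) ⊆ K². Then H(C) = C (so dim_K H(C) = 1), and for every M ∈ GL_2(F_2), the code C·M also has Hermitian hull of dimension 1. In particular C is not equivalent to any Hermitian LCD code: hull-variation fails for (q,n) = (2,2). -/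
open Matrix

lemma hull_aux {K : Type*} [Field K] [Fintype K] (hK : Fintype.card K = 4)
    (h2 : (1 : K) + 1 = 0) (v : Fin 2 → K) (h0 : v 0 ≠ 0) (h1 : v 1 ≠ 0) :
    Submodule.span K {v} ⊓ hermDual 2 2 (Submodule.span K {v}) = Submodule.span K {v} ∧
    Module.finrank K ↥(Submodule.span K {v} ⊓ hermDual 2 2 (Submodule.span K {v})) = 1 := by
  have h3 : ∀ x : K, x ≠ 0 → x ^ 3 = 1 := by
    intro x hx
    have := FiniteField.pow_card_sub_one_eq_one x hx
    rwa [hK] at this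
  have e0 := h3 _ h0
  have e1 := h3 _ h1
  have hle : Submodule.span K {v} ≤ hermDual 2 2 (Submodule.span K {v}) := by
    intro x hx
    obtain ⟨b, rfl⟩ := Submodule.mem_span_singleton.mp hx
    simp only [hermDual, Submodule.mem_iInf, LinearMap.mem_ker]
    intro c hc
    obtain ⟨a, rfl⟩ := Submodule.mem_span_singleton.mp hc
    simp only [LinearMap.sum_apply, Fin.sum_univ_two, LinearMap.add_apply,
      LinearMap.smul_apply, LinearMap.proj_apply, Pi.smul_apply, smul_eq_mul]
    linear_combination (a ^ 2 * b) * e0 + (a ^ 2 * b) * e1 + (a ^ 2 * b) * h2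
  have heq : Submodule.span K {v} ⊓ hermDual 2 2 (Submodule.span K {v}) = Submodule.span K {v} :=
    inf_eq_left.mpr hle
  refine ⟨heq, ?_⟩
  rw [heq]
  exact finrank_span_singleton (fun h => h0 (by simp [h]))

/-- over `K = F_4 = F_2(ω)`, the code `C = K·(1,ω) ⊆ K²` equals its Hermitian
hull (which has dimension 1), and every equivalent code `C·M`, `M ∈ GL₂(F_2)`, still has
Hermitian hull of dimension 1; so hull-variation fails for `(q,n) = (2,2)`. -/
theorem stmt11 (K : Type*) [Field K] [Fintype K] [Algebra (ZMod 2) K]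
    (hK : Fintype.card K = 4) (ω : K) (hω : ω ^ 2 + ω + 1 = 0)
    (C : Submodule K (Fin 2 → K)) (hC : C = Submodule.span K {![1, ω]}) :
    C ⊓ hermDual 2 2 C = C ∧ Module.finrank K ↥(C ⊓ hermDual 2 2 C) = 1 ∧
    ∀ M : Matrix (Fin 2) (Fin 2) (ZMod 2), IsUnit M →
      Module.finrank K
        ↥((C.map (M.map (algebraMap (ZMod 2) K)).vecMulLinear) ⊓
          hermDual 2 2 (C.map (M.map (algebraMap (ZMod 2) K)).vecMulLinear)) = 1 := by
  subst hC
  have h2 : (1 : K) + 1 = 0 := by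
    have h := RingHom.map_add (algebraMap (ZMod 2) K) 1 1
    rw [show ((1 : ZMod 2) + 1) = 0 by decide] at h
    simpa using h.symm
  have hω0 : ω ≠ 0 := by
    intro h; rw [h] at hω; simp at hω
  have hω1 : (1 : K) + ω ≠ 0 := by
    intro h
    have hω1' : ω = 1 := by linear_combination h - h2
    rw [hω1'] at hω
    have : (1 : K) = 0 := by linear_combination hω - h2
    exact one_ne_zero this
  have hmain := hull_aux hK h2 ![1, ω] (by simp) (by simpa using hω0)
  refine ⟨hmain.1, hmain.2, ?_⟩
  intro M hM
  have hdet : M.det ≠ 0 := by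
    intro h
    have := (Matrix.isUnit_iff_isUnit_det M).mp hM
    rw [h] at this
    simp at this
  set M' := M.map (algebraMap (ZMod 2) K) with hM'
  have hmap : (Submodule.span K {![1, ω]}).map M'.vecMulLinear =
      Submodule.span K {Matrix.vecMul ![1, ω] M'} := by
    rw [Submodule.map_span, Set.image_singleton, Matrix.vecMulLinear_apply]
  rw [hmap]
  -- entries of w
  have hz2 : ∀ x : ZMod 2, x = 0 ∨ x = 1 := by decide
  have hcol : ∀ j, Matrix.vecMul ![1, ω] M' j ≠ 0 := by
    intro j
    have hw : Matrix.vecMul ![1, ω] M' j =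
        algebraMap (ZMod 2) K (M 0 j) + ω * algebraMap (ZMod 2) K (M 1 j) := by
      simp [Matrix.vecMul, dotProduct, Fin.sum_univ_two, hM', Matrix.map_apply]
    rcases hz2 (M 0 j) with ha | ha <;> rcases hz2 (M 1 j) with hb | hb
    · exact absurd (Matrix.det_eq_zero_of_column_eq_zero j
        (fun i => by fin_cases i <;> assumption)) hdet
    · rw [hw, ha, hb]; simpa using hω0
    · rw [hw, ha, hb]; simp
    · rw [hw, ha, hb]
      simp only [_root_.map_one, mul_one]
      exact fun h => hω1 (by linear_combination h)
  exact (hull_aux hK h2 _ (hcol 0) (hcol 1)).2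
end

section
/- Let (α, λ) be a scaled trace-self-dual basis of K = F_{q^{2m}} over F_q, let s be a positive integer with gcd(s, 2m) = 1, and let 1 ≤ k ≤ m. Then the generalized Gabidulin code G_{k,s}(α) ⊆ K^{2m}, spanned over K by the rows α^{q^{is}} = (α₁^{q^{is}},…,α_{2m}^{q^{is}}) for i = 0,…,k−1, is Hermitian self-orthogonal: G_{k,s}(α) ⊆ G_{k,s}(α)^{⊥_H}. -/
/-- if `(α, λ)` is a scaled trace-self-dual basis of `K = F_{q^{2m}}` over
`F_q`, `gcd(s, 2m) = 1`, and `1 ≤ k ≤ m`, then the generalized Gabidulin code `G_{k,s}(α)`,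
spanned by the rows `α^{q^{is}}`, `i = 0,…,k-1`, is Hermitian self-orthogonal. -/
theorem stmt15 (m k s : ℕ) (hm : 1 ≤ m) (hk1 : 1 ≤ k) (hkm : k ≤ m)
    (hs : 0 < s) (hcop : Nat.Coprime s (2 * m))
    (F : Type*) [Field F] [Fintype F]
    (K : Type*) [Field K] [Fintype K] [Algebra F K]
    (hK : Fintype.card K = Fintype.card F ^ (2 * m))
    (b : Module.Basis (Fin (2 * m)) F K) (l : K) (hl : l ≠ 0)
    (hdual : ∀ i j : Fin (2 * m),
      (∑ r ∈ Finset.range (2 * m), (l * b i * b j) ^ Fintype.card F ^ r)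
        = if i = j then 1 else 0)
    (C : Submodule K (Fin (2 * m) → K))
    (hC : C = Submodule.span K
      (Set.range fun i : Fin k => fun t => (b t : K) ^ Fintype.card F ^ (i.val * s))) :
    C ≤ hermDual (2 * m) (Fintype.card F ^ m) C := by
  classical
  subst hC
  set q := Fintype.card F with hq
  have hm2 : 0 < 2 * m := by omega
  -- characteristic
  obtain ⟨p, hpchar⟩ := CharP.exists F
  haveI : CharP F p := hpchar
  obtain ⟨f, hpprime, hcardF⟩ := FiniteField.card F p
  haveI : CharP K p := charP_of_injective_algebraMap (algebraMap F K).injective p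
  haveI : Fact p.Prime := ⟨hpprime⟩
  haveI : ExpChar K p := ExpChar.prime hpprime
  -- periodicity of Frobenius powers
  have hper : ∀ (x : K) (r a : ℕ), x ^ q ^ (r + 2 * m * a) = x ^ q ^ r := by
    intro x r a
    induction a with
    | zero => simp
    | succ a ih =>
      have h1 : r + 2 * m * (a + 1) = (r + 2 * m * a) + 2 * m := by ring
      rw [h1, pow_add, pow_mul, ← hK, FiniteField.pow_card, ih]
  -- the key orthogonality: S_r = 0 for r not ≡ 0 mod 2m
  have hSr : ∀ r : ℕ, r % (2 * m) ≠ 0 → ∑ t : Fin (2 * m), b t ^ q ^ r * b t = 0 := by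
    intro r hr
    set M : Matrix (Fin (2 * m)) (Fin (2 * m)) K := fun u t => b t ^ q ^ (u : ℕ) with hM
    set N : Matrix (Fin (2 * m)) (Fin (2 * m)) K := fun t u => (l * b t) ^ q ^ (u : ℕ) with hN
    have hNM : N * M = 1 := by
      ext t t'
      have hterm : ∀ u : Fin (2 * m),
          (l * b t) ^ q ^ (u : ℕ) * b t' ^ q ^ (u : ℕ) = (l * b t * b t') ^ q ^ (u : ℕ) :=
        fun u => (mul_pow _ _ _).symm
      rw [Matrix.mul_apply]
      simp only [hM, hN]
      rw [Finset.sum_congr rfl fun u _ => hterm u,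
        Fin.sum_univ_eq_sum_range (fun u => (l * b t * b t') ^ q ^ u) (2 * m),
        hdual t t', Matrix.one_apply]
    have hMN : M * N = 1 := mul_eq_one_comm.mp hNM
    have hrlt : r % (2 * m) < 2 * m := Nat.mod_lt _ hm2
    have h1 := congrFun (congrFun hMN ⟨r % (2 * m), hrlt⟩) ⟨0, hm2⟩
    rw [Matrix.mul_apply, Matrix.one_apply] at h1
    simp only [hM, hN] at h1
    rw [if_neg (fun hEq => hr (by simpa using congrArg Fin.val hEq))] at h1
    have h2 : ∑ t : Fin (2 * m), b t ^ q ^ (r % (2 * m)) * (l * b t) ^ q ^ (0 : ℕ)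
        = l * ∑ t : Fin (2 * m), b t ^ q ^ (r % (2 * m)) * b t := by
      rw [Finset.mul_sum]
      refine Finset.sum_congr rfl fun t _ => ?_
      rw [pow_zero, pow_one]
      ring
    rw [h2] at h1
    have h3 : ∑ t : Fin (2 * m), b t ^ q ^ (r % (2 * m)) * b t = 0 :=
      (mul_eq_zero.mp h1).resolve_left hl
    have h4 : ∀ t : Fin (2 * m), b t ^ q ^ r = b t ^ q ^ (r % (2 * m)) := by
      intro t
      conv_lhs => rw [← Nat.mod_add_div r (2 * m)]
      exact hper (b t) (r % (2 * m)) (r / (2 * m))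
    rw [Finset.sum_congr rfl fun t _ => by rw [h4 t]]
    exact h3
  -- the main inner-product computation on the generators
  have key : ∀ i j : ℕ, i < k → j < k →
      ∑ t : Fin (2 * m), (b t ^ q ^ (j * s)) ^ q ^ m * b t ^ q ^ (i * s) = 0 := by
    intro i j hi hj
    set e := j * s + m + 2 * m * (i * s) - i * s with he
    have his : i * s ≤ 2 * m * (i * s) := Nat.le_mul_of_pos_left _ hm2
    have heis : e + i * s = j * s + m + 2 * m * (i * s) := by omega
    have hemod : e % (2 * m) ≠ 0 := by
      intro h0
      have hdvde : ((2 * m : ℕ) : ℤ) ∣ (e : ℤ) :=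
        Int.natCast_dvd_natCast.mpr (Nat.dvd_of_mod_eq_zero h0)
      have hcast : (e : ℤ) = (j : ℤ) * s + m - (i : ℤ) * s + 2 * m * ((i : ℤ) * s) := by
        have := congrArg (fun n : ℕ => (n : ℤ)) heis
        push_cast at this ⊢
        linarith
      have hdvd : ((2 * m : ℕ) : ℤ) ∣ ((j : ℤ) * s + m - (i : ℤ) * s) := by
        have h5 : ((2 * m : ℕ) : ℤ) ∣ 2 * m * ((i : ℤ) * s) := by
          push_cast
          exact Dvd.intro _ rfl
        have := dvd_sub hdvde h5
        rw [hcast] at this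
        simpa using this
      have hmdvd : (m : ℤ) ∣ ((j : ℤ) * s - (i : ℤ) * s) := by
        have hm2m : (m : ℤ) ∣ ((2 * m : ℕ) : ℤ) := by push_cast; exact ⟨2, by ring⟩
        have h6 : (m : ℤ) ∣ ((j : ℤ) * s + m - (i : ℤ) * s) := hm2m.trans hdvd
        have := dvd_sub h6 (dvd_refl (m : ℤ))
        convert this using 1
        · rfl
        · ring
      have hms : Nat.Coprime m s := (hcop.coprime_dvd_right ⟨2, by ring⟩).symm
      have hco : IsCoprime (m : ℤ) (s : ℤ) := Nat.isCoprime_iff_coprime.mpr hms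
      have hmd : (m : ℤ) ∣ ((j : ℤ) - i) := by
        refine hco.dvd_of_dvd_mul_right ?_
        have : ((j : ℤ) - i) * s = (j : ℤ) * s - (i : ℤ) * s := by ring
        rw [this]
        exact hmdvd
      have habs : |(j : ℤ) - i| < (m : ℤ) := by
        rw [abs_lt]
        constructor <;> [skip; skip] <;> omega
      have hji : (j : ℤ) - i = 0 := Int.eq_zero_of_abs_lt_dvd hmd habs
      have hij : i = j := by omega
      subst hij
      have h7 : ((2 * m : ℕ) : ℤ) ∣ (m : ℤ) := by
        have : ((i : ℤ) * s + m - (i : ℤ) * s) = (m : ℤ) := by ring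
        rw [← this]
        exact hdvd
      have h8 : ((2 * m : ℕ) : ℤ) ≤ (m : ℤ) := Int.le_of_dvd (by omega) h7
      omega
    have hfrob : ∀ (a : ℕ) (x : K), (iterateFrobenius K p (f * a)) x = x ^ q ^ a := by
      intro a x
      rw [iterateFrobenius_def, hq, hcardF, ← pow_mul]
    calc ∑ t : Fin (2 * m), (b t ^ q ^ (j * s)) ^ q ^ m * b t ^ q ^ (i * s)
        = ∑ t : Fin (2 * m), (iterateFrobenius K p (f * (i * s))) (b t ^ q ^ e * b t) := by
          refine Finset.sum_congr rfl fun t _ => ?_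
          have lhs1 : (b t ^ q ^ (j * s)) ^ q ^ m = b t ^ q ^ (j * s + m) := by
            rw [← pow_mul, ← pow_add]
          have rhs1 : (b t ^ q ^ e) ^ q ^ (i * s) = b t ^ q ^ (j * s + m) := by
            rw [← pow_mul, ← pow_add, heis]
            exact hper (b t) (j * s + m) (i * s)
          rw [map_mul, hfrob, hfrob, lhs1, rhs1]
      _ = (iterateFrobenius K p (f * (i * s))) (∑ t : Fin (2 * m), b t ^ q ^ e * b t) :=
          (map_sum _ _ _).symm
      _ = 0 := by rw [hSr e hemod, map_zero]
  -- semilinearity helper for the Hermitian exponent q^m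
  have hfm : ∀ x : K, x ^ q ^ m = (iterateFrobenius K p (f * m)) x := by
    intro x
    rw [iterateFrobenius_def, hq, hcardF, ← pow_mul]
  -- now the main argument
  intro x hx
  simp only [hermDual, Submodule.mem_iInf, LinearMap.mem_ker, LinearMap.coe_sum,
    Finset.sum_apply, LinearMap.smul_apply, LinearMap.proj_apply, smul_eq_mul]
  refine Submodule.span_induction
    (p := fun x _ => ∀ c ∈ Submodule.span K
      (Set.range fun i : Fin k => fun t => (b t : K) ^ q ^ (i.val * s)),
      ∑ t : Fin (2 * m), c t ^ q ^ m * x t = 0)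
    ?_ ?_ ?_ ?_ hx
  · -- x is a generator
    rintro _ ⟨i, rfl⟩ c hc
    refine Submodule.span_induction
      (p := fun c _ => ∑ t : Fin (2 * m),
        c t ^ q ^ m * (b t ^ q ^ (i.val * s)) = 0) ?_ ?_ ?_ ?_ hc
    · rintro _ ⟨j, rfl⟩
      exact key i.val j.val i.isLt j.isLt
    · simp [zero_pow (ne_of_gt (Nat.pow_pos (n := m) (Fintype.card_pos (α := F)) : 0 < q ^ m))]
    · intro c1 c2 _ _ h1 h2
      have : ∀ t : Fin (2 * m), ((c1 + c2) t) ^ q ^ m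
          = c1 t ^ q ^ m + c2 t ^ q ^ m := by
        intro t
        simp only [Pi.add_apply, hfm, map_add]
      rw [Finset.sum_congr rfl fun t _ => by rw [this t, add_mul]]
      rw [Finset.sum_add_distrib, h1, h2, add_zero]
    · intro a c _ h
      have : ∀ t : Fin (2 * m), ((a • c) t) ^ q ^ m * (b t ^ q ^ (i.val * s))
          = a ^ q ^ m * (c t ^ q ^ m * (b t ^ q ^ (i.val * s))) := by
        intro t
        simp only [Pi.smul_apply, smul_eq_mul, mul_pow]
        ring
      rw [Finset.sum_congr rfl fun t _ => this t, ← Finset.mul_sum, h, mul_zero]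
  · intro c _
    simp
  · intro x y _ _ h1 h2 c hc
    have : ∀ t : Fin (2 * m), c t ^ q ^ m * (x + y) t
        = c t ^ q ^ m * x t + c t ^ q ^ m * y t := by
      intro t; simp [Pi.add_apply, mul_add]
    rw [Finset.sum_congr rfl fun t _ => this t, Finset.sum_add_distrib, h1 c hc, h2 c hc,
      add_zero]
  · intro a x _ h c hc
    have : ∀ t : Fin (2 * m), c t ^ q ^ m * (a • x) t
        = a * (c t ^ q ^ m * x t) := by
      intro t; simp only [Pi.smul_apply, smul_eq_mul]; ring
    rw [Finset.sum_congr rfl fun t _ => this t, ← Finset.mul_sum, h c hc, mul_zero]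
end
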